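/- For N ≥ 2, the double sum ∑_{m ≤ N} ∑_{n ≤ N} τ₃(m)τ₃(n)/lcm(m,n) is O((log N)^{15}). -/

import Mathlib

set_option maxHeartbeats 1000000

/-- The 3-fold divisor function: number of ordered triples of positive integers with product `n`. -/
noncomputable def tau3 (n : ℕ) : ℕ :=
  Nat.card {t : ℕ × ℕ × ℕ // 0 < t.1 ∧ 0 < t.2.1 ∧ 0 < t.2.2 ∧ t.1 * t.2.1 * t.2.2 = n}

open Finset

def T3 (n : ℕ) : Finset (ℕ × ℕ × ℕ) :=
  ((Icc 1 n ×ˢ Icc 1 n ×ˢ Icc 1 n)).filter (fun t => t.1 * t.2.1 * t.2.2 = n)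

lemma mem_T3 {n : ℕ} (hn : 0 < n) {t : ℕ × ℕ × ℕ} :
    t ∈ T3 n ↔ 0 < t.1 ∧ 0 < t.2.1 ∧ 0 < t.2.2 ∧ t.1 * t.2.1 * t.2.2 = n := by
  obtain ⟨a, b, c⟩ := t
  simp only [T3, mem_filter, mem_product, mem_Icc]
  constructor
  · rintro ⟨⟨⟨h1, _⟩, ⟨h2, _⟩, ⟨h3, _⟩⟩, h⟩
    exact ⟨h1, h2, h3, h⟩
  · rintro ⟨h1, h2, h3, h⟩
    refine ⟨⟨⟨h1, ?_⟩, ⟨h2, ?_⟩, ⟨h3, ?_⟩⟩, h⟩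
    · exact Nat.le_of_dvd hn ⟨b * c, by rw [← h]; ring⟩
    · exact Nat.le_of_dvd hn ⟨a * c, by rw [← h]; ring⟩
    · exact Nat.le_of_dvd hn ⟨a * b, by rw [← h]; ring⟩

lemma tau3_eq_card {n : ℕ} (hn : 0 < n) : tau3 n = (T3 n).card := by
  rw [tau3]
  have : {t : ℕ × ℕ × ℕ | 0 < t.1 ∧ 0 < t.2.1 ∧ 0 < t.2.2 ∧ t.1 * t.2.1 * t.2.2 = n}
      = (T3 n : Set (ℕ × ℕ × ℕ)) := by
    ext t; simp [mem_T3 hn]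
  rw [show {t : ℕ × ℕ × ℕ // 0 < t.1 ∧ 0 < t.2.1 ∧ 0 < t.2.2 ∧ t.1 * t.2.1 * t.2.2 = n}
    = {t : ℕ × ℕ × ℕ // t ∈ {t : ℕ × ℕ × ℕ | 0 < t.1 ∧ 0 < t.2.1 ∧ 0 < t.2.2 ∧ t.1 * t.2.1 * t.2.2 = n}} from rfl]
  rw [Nat.card_coe_set_eq, this, Set.ncard_coe_finset]

lemma split2_spec (a x y : ℕ) (ha : 0 < a) (h : a ∣ x * y) :
    Nat.gcd a x ∣ x ∧ (a / Nat.gcd a x) ∣ y ∧ Nat.gcd a x * (a / Nat.gcd a x) = a := by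
  have hg : 0 < Nat.gcd a x := Nat.gcd_pos_of_pos_left x ha
  have hga : Nat.gcd a x ∣ a := Nat.gcd_dvd_left a x
  have hgx : Nat.gcd a x ∣ x := Nat.gcd_dvd_right a x
  refine ⟨hgx, ?_, Nat.mul_div_cancel' hga⟩
  have hcop : Nat.Coprime (a / Nat.gcd a x) (x / Nat.gcd a x) :=
    Nat.coprime_div_gcd_div_gcd hg
  have h2 : a / Nat.gcd a x ∣ (x / Nat.gcd a x) * y := by
    have : Nat.gcd a x * (a / Nat.gcd a x) ∣ Nat.gcd a x * ((x / Nat.gcd a x) * y) := by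
      rw [Nat.mul_div_cancel' hga, ← mul_assoc, Nat.mul_div_cancel' hgx]; exact h
    exact (mul_dvd_mul_iff_left (Nat.pos_iff_ne_zero.mp hg)).mp this
  exact (Nat.Coprime.dvd_of_dvd_mul_left hcop h2)
open Finset

/-- split a positive integer `a` dividing `x*(y*z)` into three parts dividing x, y, z. -/
def split3 (a x y : ℕ) : ℕ × ℕ × ℕ :=
  (Nat.gcd a x, Nat.gcd (a / Nat.gcd a x) y, (a / Nat.gcd a x) / Nat.gcd (a / Nat.gcd a x) y)

lemma split3_spec (a x y z : ℕ) (ha : 0 < a) (h : a ∣ x * (y * z)) :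
    (split3 a x y).1 ∣ x ∧ (split3 a x y).2.1 ∣ y ∧ (split3 a x y).2.2 ∣ z ∧
      (split3 a x y).1 * ((split3 a x y).2.1 * (split3 a x y).2.2) = a := by
  obtain ⟨h1, h2, h3⟩ := split2_spec a x (y * z) ha h
  set a1 := a / Nat.gcd a x with ha1
  have ha1pos : 0 < a1 := by
    rcases Nat.eq_zero_or_pos a1 with h0 | h0
    · rw [h0, mul_zero] at h3; omega
    · exact h0
  obtain ⟨g1, g2, g3⟩ := split2_spec a1 y z ha1pos h2
  exact ⟨h1, g1, g2, by rw [split3]; dsimp only; rw [← ha1, g3, h3]⟩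

/-- Split two triples with equal product into a 3×3 matrix with given row and column products -/
def rows3 (a b c x y z : ℕ) : (ℕ×ℕ×ℕ) × (ℕ×ℕ×ℕ) × (ℕ×ℕ×ℕ) :=
  let r1 := split3 a x y
  let x1 := x / r1.1; let y1 := y / r1.2.1; let z1 := z / r1.2.2
  let r2 := split3 b x1 y1
  (r1, r2, (x1 / r2.1, y1 / r2.2.1, z1 / r2.2.2))

lemma rows3_spec (a b c x y z : ℕ) (ha : 0 < a) (hb : 0 < b) (hc : 0 < c)
    (h : a * (b * c) = x * (y * z)) :
    let M := rows3 a b c x y z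
    (M.1.1 * (M.1.2.1 * M.1.2.2) = a) ∧
    (M.2.1.1 * (M.2.1.2.1 * M.2.1.2.2) = b) ∧
    (M.2.2.1 * (M.2.2.2.1 * M.2.2.2.2) = c) ∧
    (M.1.1 * (M.2.1.1 * M.2.2.1) = x) ∧
    (M.1.2.1 * (M.2.1.2.1 * M.2.2.2.1) = y) ∧
    (M.1.2.2 * (M.2.1.2.2 * M.2.2.2.2) = z) := by
  intro M
  have hdvd1 : a ∣ x * (y * z) := ⟨b * c, h.symm⟩
  obtain ⟨d11x, d12y, d13z, hr1⟩ := split3_spec a x y z ha hdvd1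
  set r1 := split3 a x y with hr1def
  set x1 := x / r1.1 with hx1
  set y1 := y / r1.2.1 with hy1
  set z1 := z / r1.2.2 with hz1
  have ex : r1.1 * x1 = x := Nat.mul_div_cancel' d11x
  have ey : r1.2.1 * y1 = y := Nat.mul_div_cancel' d12y
  have ez : r1.2.2 * z1 = z := Nat.mul_div_cancel' d13z
  have hbc : b * c = x1 * (y1 * z1) := by
    have : a * (b * c) = a * (x1 * (y1 * z1)) := by
      rw [h, ← ex, ← ey, ← ez, ← hr1]; ring
    exact Nat.eq_of_mul_eq_mul_left ha this
  have hdvd2 : b ∣ x1 * (y1 * z1) := ⟨c, by rw [← hbc]⟩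
  obtain ⟨d21x, d22y, d23z, hr2⟩ := split3_spec b x1 y1 z1 hb hdvd2
  set r2 := split3 b x1 y1 with hr2def
  set x2 := x1 / r2.1 with hx2
  set y2 := y1 / r2.2.1 with hy2
  set z2 := z1 / r2.2.2 with hz2
  have ex2 : r2.1 * x2 = x1 := Nat.mul_div_cancel' d21x
  have ey2 : r2.2.1 * y2 = y1 := Nat.mul_div_cancel' d22y
  have ez2 : r2.2.2 * z2 = z1 := Nat.mul_div_cancel' d23z
  have hcc : c = x2 * (y2 * z2) := by
    have : b * c = b * (x2 * (y2 * z2)) := by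
      rw [hbc, ← ex2, ← ey2, ← ez2, ← hr2]; ring
    exact Nat.eq_of_mul_eq_mul_left hb this
  have hM : M = (r1, r2, (x2, y2, z2)) := rfl
  rw [hM]
  refine ⟨hr1, hr2, hcc.symm, ?_, ?_, ?_⟩
  · dsimp only; rw [ex2, ex]
  · dsimp only; rw [ey2, ey]
  · dsimp only; rw [ez2, ez]
open Finset

/-- Split a triple with product `d*u` into a triple for `d` and a triple for `u`. -/
def cols2 (a b c d u : ℕ) : (ℕ×ℕ×ℕ) × (ℕ×ℕ×ℕ) :=
  let a1 := Nat.gcd a d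
  let a2 := a / a1
  let d1 := d / a1
  let u1 := u / a2
  let b1 := Nat.gcd b d1
  let b2 := b / b1
  ((a1, b1, d1 / b1), (a2, b2, u1 / b2))

lemma cols2_spec (a b c d u : ℕ) (ha : 0 < a) (hb : 0 < b) (hc : 0 < c)
    (h : a * b * c = d * u) :
    let M := cols2 a b c d u
    M.1.1 * M.1.2.1 * M.1.2.2 = d ∧ M.2.1 * M.2.2.1 * M.2.2.2 = u ∧
    M.1.1 * M.2.1 = a ∧ M.1.2.1 * M.2.2.1 = b ∧ M.1.2.2 * M.2.2.2 = c := by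
  intro M
  have hdvd1 : a ∣ d * u := ⟨b * c, by rw [← h]; ring⟩
  obtain ⟨ha1d, ha2u, ha12⟩ := split2_spec a d u ha hdvd1
  set a1 := Nat.gcd a d with ha1
  set a2 := a / a1 with ha2
  set d1 := d / a1 with hd1
  set u1 := u / a2 with hu1
  have ed : a1 * d1 = d := Nat.mul_div_cancel' ha1d
  have eu : a2 * u1 = u := Nat.mul_div_cancel' ha2u
  have hbc : b * c = d1 * u1 := by
    have : a * (b * c) = a * (d1 * u1) := by rw [show a * (b*c) = a*b*c by ring, h, ← ed, ← eu, ← ha12]; ring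
    exact Nat.eq_of_mul_eq_mul_left ha this
  have hdvd2 : b ∣ d1 * u1 := ⟨c, by rw [← hbc]⟩
  obtain ⟨hb1d, hb2u, hb12⟩ := split2_spec b d1 u1 hb hdvd2
  set b1 := Nat.gcd b d1 with hb1
  set b2 := b / b1 with hb2
  have ed2 : b1 * (d1 / b1) = d1 := Nat.mul_div_cancel' hb1d
  have eu2 : b2 * (u1 / b2) = u1 := Nat.mul_div_cancel' hb2u
  have hcc : c = (d1 / b1) * (u1 / b2) := by
    have key : b * ((d1 / b1) * (u1 / b2)) = d1 * u1 := by
      calc b * ((d1 / b1) * (u1 / b2)) = (b1 * (d1 / b1)) * (b2 * (u1 / b2)) := by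
            rw [← hb12]; ring
        _ = d1 * u1 := by rw [ed2, eu2]
    exact Nat.eq_of_mul_eq_mul_left hb (by rw [key, hbc])
  have hM : M = ((a1, b1, d1 / b1), (a2, b2, u1 / b2)) := rfl
  rw [hM]
  refine ⟨?_, ?_, ha12, hb12, hcc.symm⟩
  · dsimp only; rw [mul_assoc, ed2, ed]
  · dsimp only; rw [mul_assoc, eu2, eu]
lemma tau3_submul {d u : ℕ} (hd : 0 < d) (hu : 0 < u) :
    tau3 (d * u) ≤ tau3 d * tau3 u := by
  have hdu : 0 < d * u := Nat.mul_pos hd hu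
  rw [tau3_eq_card hdu, tau3_eq_card hd, tau3_eq_card hu, ← card_product]
  apply Finset.card_le_card_of_injOn (fun t => cols2 t.1 t.2.1 t.2.2 d u)
  · intro t ht
    rw [Finset.mem_coe, mem_T3 hdu] at ht
    obtain ⟨h1, h2, h3, h4⟩ := ht
    obtain ⟨p1, p2, q1, q2, q3⟩ := cols2_spec t.1 t.2.1 t.2.2 d u h1 h2 h3 h4
    set M := cols2 t.1 t.2.1 t.2.2 d u
    rw [Finset.mem_coe, mem_product, mem_T3 hd, mem_T3 hu]
    have m1 : 0 < M.1.1 ∧ 0 < M.2.1 := by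
      constructor <;> [rcases Nat.eq_zero_or_pos M.1.1 with h0|h0; rcases Nat.eq_zero_or_pos M.2.1 with h0|h0] <;>
        first | (exfalso; rw [h0] at q1; simp at q1; omega) | exact h0
    have m2 : 0 < M.1.2.1 ∧ 0 < M.2.2.1 := by
      constructor <;> [rcases Nat.eq_zero_or_pos M.1.2.1 with h0|h0; rcases Nat.eq_zero_or_pos M.2.2.1 with h0|h0] <;>
        first | (exfalso; rw [h0] at q2; simp at q2; omega) | exact h0
    have m3 : 0 < M.1.2.2 ∧ 0 < M.2.2.2 := by
      constructor <;> [rcases Nat.eq_zero_or_pos M.1.2.2 with h0|h0; rcases Nat.eq_zero_or_pos M.2.2.2 with h0|h0] <;>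
        first | (exfalso; rw [h0] at q3; simp at q3; omega) | exact h0
    exact ⟨⟨m1.1, m2.1, m3.1, p1⟩, ⟨m1.2, m2.2, m3.2, p2⟩⟩
  · intro s hs t ht hst
    rw [Finset.mem_coe, mem_T3 hdu] at hs ht
    obtain ⟨hs1, hs2, hs3, hs4⟩ := hs
    obtain ⟨ht1, ht2, ht3, ht4⟩ := ht
    obtain ⟨_, _, qs1, qs2, qs3⟩ := cols2_spec s.1 s.2.1 s.2.2 d u hs1 hs2 hs3 hs4
    obtain ⟨_, _, qt1, qt2, qt3⟩ := cols2_spec t.1 t.2.1 t.2.2 d u ht1 ht2 ht3 ht4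
    have hst' : cols2 s.1 s.2.1 s.2.2 d u = cols2 t.1 t.2.1 t.2.2 d u := hst
    have e1 : s.1 = t.1 := by rw [← qs1, ← qt1, hst']
    have e2 : s.2.1 = t.2.1 := by rw [← qs2, ← qt2, hst']
    have e3 : s.2.2 = t.2.2 := by rw [← qs3, ← qt3, hst']
    exact Prod.ext e1 (Prod.ext e2 e3)

open Finset

noncomputable def HN (N : ℕ) : ℝ := ∑ k ∈ Icc 1 N, (k : ℝ)⁻¹

noncomputable def W (t : ℕ × ℕ × ℕ) : ℝ := (t.1 : ℝ)⁻¹ * (t.2.1 : ℝ)⁻¹ * (t.2.2 : ℝ)⁻¹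

def cube (N : ℕ) : Finset (ℕ × ℕ × ℕ) := Icc 1 N ×ˢ Icc 1 N ×ˢ Icc 1 N

lemma W_nonneg (t : ℕ × ℕ × ℕ) : 0 ≤ W t := by
  unfold W; positivity

lemma W_eq (t : ℕ × ℕ × ℕ) : W t = ((t.1 * t.2.1 * t.2.2 : ℕ) : ℝ)⁻¹ := by
  unfold W; push_cast; rw [mul_inv, mul_inv]

lemma sum_cube (N : ℕ) : ∑ t ∈ cube N, W t = HN N ^ 3 := by
  have h2 : ∑ p ∈ Icc 1 N ×ˢ Icc 1 N, ((p.1 : ℝ)⁻¹ * (p.2 : ℝ)⁻¹) = HN N * HN N := by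
    rw [HN, Finset.sum_mul_sum, Finset.sum_product]
  calc ∑ t ∈ cube N, W t
      = ∑ a ∈ Icc 1 N, ∑ p ∈ Icc 1 N ×ˢ Icc 1 N, (a : ℝ)⁻¹ * ((p.1 : ℝ)⁻¹ * (p.2 : ℝ)⁻¹) := by
        rw [cube, Finset.sum_product]
        exact Finset.sum_congr rfl fun a _ => Finset.sum_congr rfl fun p _ => by
          simp only [W]; ring
    _ = ∑ a ∈ Icc 1 N, (a : ℝ)⁻¹ * (HN N * HN N) :=
        Finset.sum_congr rfl fun a _ => by rw [← Finset.mul_sum, h2]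
    _ = HN N ^ 3 := by rw [← Finset.sum_mul, ← HN]; ring
lemma T3_subset_cube {N u : ℕ} (hu : u ∈ Icc 1 N) : T3 u ⊆ cube N := by
  rw [mem_Icc] at hu
  have hu0 : 0 < u := hu.1
  intro t ht
  rw [mem_T3 hu0] at ht
  obtain ⟨h1, h2, h3, h4⟩ := ht
  have d1 : t.1 ≤ u := Nat.le_of_dvd hu0 ⟨t.2.1 * t.2.2, by rw [← h4]; ring⟩
  have d2 : t.2.1 ≤ u := Nat.le_of_dvd hu0 ⟨t.1 * t.2.2, by rw [← h4]; ring⟩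
  have d3 : t.2.2 ≤ u := Nat.le_of_dvd hu0 ⟨t.1 * t.2.1, by rw [← h4]; ring⟩
  rw [cube, mem_product, mem_product, mem_Icc, mem_Icc, mem_Icc]
  exact ⟨⟨h1, d1.trans hu.2⟩, ⟨h2, d2.trans hu.2⟩, ⟨h3, d3.trans hu.2⟩⟩

lemma T3_disjoint (N : ℕ) : Set.PairwiseDisjoint ↑(Icc 1 N) T3 := by
  intro u hu v hv huv
  rw [Finset.mem_coe, mem_Icc] at hu hv
  rw [Function.onFun, Finset.disjoint_left]
  intro t htu htv
  rw [mem_T3 hu.1] at htu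
  rw [mem_T3 hv.1] at htv
  exact huv (htu.2.2.2.symm.trans htv.2.2.2)

lemma sum_T3 {u : ℕ} (hu : 0 < u) : ∑ t ∈ T3 u, W t = (tau3 u : ℝ) * (u : ℝ)⁻¹ := by
  rw [tau3_eq_card hu]
  have : ∀ t ∈ T3 u, W t = ((u : ℕ) : ℝ)⁻¹ := fun t ht => by
    rw [W_eq, ((mem_T3 hu).mp ht).2.2.2]
  rw [Finset.sum_congr rfl this, Finset.sum_const, nsmul_eq_mul]

lemma Bsum_le (N : ℕ) : ∑ u ∈ Icc 1 N, (tau3 u : ℝ) * (u : ℝ)⁻¹ ≤ HN N ^ 3 := by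
  calc ∑ u ∈ Icc 1 N, (tau3 u : ℝ) * (u : ℝ)⁻¹
      = ∑ u ∈ Icc 1 N, ∑ t ∈ T3 u, W t :=
        Finset.sum_congr rfl fun u hu => (sum_T3 (mem_Icc.mp hu).1).symm
    _ = ∑ t ∈ (Icc 1 N).biUnion T3, W t := (Finset.sum_biUnion (T3_disjoint N)).symm
    _ ≤ ∑ t ∈ cube N, W t := Finset.sum_le_sum_of_subset_of_nonneg
        (Finset.biUnion_subset.mpr fun u hu => T3_subset_cube hu)
        (fun t _ _ => W_nonneg t)
    _ = HN N ^ 3 := sum_cube N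
lemma Asum_le (N : ℕ) {d : ℕ} (hd : 0 < d) :
    ∑ m ∈ (Icc 1 N).filter (fun m => d ∣ m), (tau3 m : ℝ) * (m : ℝ)⁻¹
      ≤ (tau3 d : ℝ) * (d : ℝ)⁻¹ * ∑ u ∈ Icc 1 N, (tau3 u : ℝ) * (u : ℝ)⁻¹ := by
  set F := (Icc 1 N).filter (fun m => d ∣ m) with hF
  set g : ℕ → ℝ := fun u => (tau3 d : ℝ) * (d : ℝ)⁻¹ * ((tau3 u : ℝ) * (u : ℝ)⁻¹) with hg
  have key : ∀ m ∈ F, (tau3 m : ℝ) * (m : ℝ)⁻¹ ≤ g (m / d) := by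
    intro m hm
    rw [hF, mem_filter, mem_Icc] at hm
    obtain ⟨⟨hm1, hmN⟩, hdm⟩ := hm
    have hmd : d * (m / d) = m := Nat.mul_div_cancel' hdm
    have hu : 0 < m / d := Nat.div_pos (Nat.le_of_dvd hm1 hdm) hd
    have hsub : (tau3 m : ℝ) ≤ (tau3 d : ℝ) * (tau3 (m / d) : ℝ) := by
      have h' := tau3_submul hd hu
      rw [hmd] at h'
      exact_mod_cast h'
    calc (tau3 m : ℝ) * (m : ℝ)⁻¹
        ≤ ((tau3 d : ℝ) * (tau3 (m / d) : ℝ)) * (m : ℝ)⁻¹ :=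
          mul_le_mul_of_nonneg_right hsub (by positivity)
      _ = g (m / d) := by
          have hcast : (m : ℝ) = (d : ℝ) * ((m / d : ℕ) : ℝ) := by exact_mod_cast hmd.symm
          rw [hg]; dsimp only; rw [hcast, mul_inv]; ring
  have inj : Set.InjOn (fun m => m / d) ↑F := by
    intro m1 h1 m2 h2 he
    rw [Finset.mem_coe, hF, mem_filter] at h1 h2
    have e1 : d * (m1 / d) = m1 := Nat.mul_div_cancel' h1.2
    have e2 : d * (m2 / d) = m2 := Nat.mul_div_cancel' h2.2
    simp only at he
    rw [← e1, ← e2, he]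
  calc ∑ m ∈ F, (tau3 m : ℝ) * (m : ℝ)⁻¹
      ≤ ∑ m ∈ F, g (m / d) := Finset.sum_le_sum key
    _ = ∑ u ∈ F.image (fun m => m / d), g u := (Finset.sum_image (fun a ha b hb =>
          inj (Finset.mem_coe.mpr ha) (Finset.mem_coe.mpr hb))).symm
    _ ≤ ∑ u ∈ Icc 1 N, g u := by
        apply Finset.sum_le_sum_of_subset_of_nonneg
        · intro u hu
          rw [Finset.mem_image] at hu
          obtain ⟨m, hm, rfl⟩ := hu
          rw [hF, mem_filter, mem_Icc] at hm
          rw [mem_Icc]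
          exact ⟨Nat.div_pos (Nat.le_of_dvd hm.1.1 hm.2) hd,
            (Nat.div_le_self m d).trans hm.1.2⟩
        · intro u _ _
          rw [hg]; positivity
    _ = (tau3 d : ℝ) * (d : ℝ)⁻¹ * ∑ u ∈ Icc 1 N, (tau3 u : ℝ) * (u : ℝ)⁻¹ := by
        rw [hg, ← Finset.mul_sum]
noncomputable def G (T : (ℕ×ℕ×ℕ) × (ℕ×ℕ×ℕ) × (ℕ×ℕ×ℕ)) : ℝ := W T.1 * (W T.2.1 * W T.2.2)

lemma sum_cube9 (N : ℕ) : ∑ T ∈ cube N ×ˢ cube N ×ˢ cube N, G T = HN N ^ 9 := by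
  have h2 : ∑ p ∈ cube N ×ˢ cube N, (W p.1 * W p.2)
      = (∑ t ∈ cube N, W t) * (∑ t ∈ cube N, W t) := by
    rw [Finset.sum_mul_sum, Finset.sum_product]
  calc ∑ T ∈ cube N ×ˢ cube N ×ˢ cube N, G T
      = ∑ a ∈ cube N, ∑ p ∈ cube N ×ˢ cube N, W a * (W p.1 * W p.2) := by
        rw [Finset.sum_product]
        exact Finset.sum_congr rfl fun a _ => Finset.sum_congr rfl fun p _ => rfl
    _ = ∑ a ∈ cube N, W a * (HN N ^ 3 * HN N ^ 3) :=
        Finset.sum_congr rfl fun a _ => by rw [← Finset.mul_sum, h2, sum_cube N]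
    _ = HN N ^ 9 := by rw [← Finset.sum_mul, sum_cube N]; ring

noncomputable def FF (p : (ℕ×ℕ×ℕ) × (ℕ×ℕ×ℕ)) : ℝ :=
  W p.1 * W p.2 * ((p.1.1 * p.1.2.1 * p.1.2.2 : ℕ) : ℝ)

def Phi (p : (ℕ×ℕ×ℕ) × (ℕ×ℕ×ℕ)) : (ℕ×ℕ×ℕ) × (ℕ×ℕ×ℕ) × (ℕ×ℕ×ℕ) :=
  rows3 p.1.1 p.1.2.1 p.1.2.2 p.2.1 p.2.2.1 p.2.2.2

lemma mul3_pos {i j k n : ℕ} (h : i * (j * k) = n) (hn : 0 < n) :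
    0 < i ∧ 0 < j ∧ 0 < k := by
  refine ⟨Nat.pos_of_ne_zero ?_, Nat.pos_of_ne_zero ?_, Nat.pos_of_ne_zero ?_⟩ <;>
    rintro rfl <;> simp at h <;> omega

lemma Phi_spec {d : ℕ} (hd : 0 < d) {p : (ℕ×ℕ×ℕ) × (ℕ×ℕ×ℕ)}
    (hp : p ∈ T3 d ×ˢ T3 d) :
    let M := Phi p
    (M.1.1 * (M.1.2.1 * M.1.2.2) = p.1.1) ∧
    (M.2.1.1 * (M.2.1.2.1 * M.2.1.2.2) = p.1.2.1) ∧
    (M.2.2.1 * (M.2.2.2.1 * M.2.2.2.2) = p.1.2.2) ∧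
    (M.1.1 * (M.2.1.1 * M.2.2.1) = p.2.1) ∧
    (M.1.2.1 * (M.2.1.2.1 * M.2.2.2.1) = p.2.2.1) ∧
    (M.1.2.2 * (M.2.1.2.2 * M.2.2.2.2) = p.2.2.2) := by
  rw [mem_product] at hp
  obtain ⟨h1, h2, h3, h4⟩ := (mem_T3 hd).mp hp.1
  obtain ⟨g1, g2, g3, g4⟩ := (mem_T3 hd).mp hp.2
  exact rows3_spec p.1.1 p.1.2.1 p.1.2.2 p.2.1 p.2.2.1 p.2.2.2 h1 h2 h3
    (by rw [← mul_assoc, h4, ← g4]; ring)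

lemma tau3sq_le (N : ℕ) :
    ∑ d ∈ Icc 1 N, (tau3 d : ℝ) * (tau3 d : ℝ) * (d : ℝ)⁻¹ ≤ HN N ^ 9 := by
  -- value of FF on pairs
  have hval : ∀ d ∈ Icc 1 N, ∀ p ∈ T3 d ×ˢ T3 d, FF p = (d : ℝ)⁻¹ := by
    intro d hd p hp
    have hd0 : 0 < d := (mem_Icc.mp hd).1
    rw [mem_product] at hp
    obtain ⟨_, _, _, h4⟩ := (mem_T3 hd0).mp hp.1
    obtain ⟨_, _, _, g4⟩ := (mem_T3 hd0).mp hp.2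
    rw [FF, W_eq, W_eq, h4, g4]
    have : (d : ℝ) ≠ 0 := Nat.cast_ne_zero.mpr hd0.ne'
    field_simp
  -- per-d sum
  have hper : ∀ d ∈ Icc 1 N,
      (tau3 d : ℝ) * (tau3 d : ℝ) * (d : ℝ)⁻¹ = ∑ p ∈ T3 d ×ˢ T3 d, FF p := by
    intro d hd
    have hd0 : 0 < d := (mem_Icc.mp hd).1
    rw [Finset.sum_congr rfl (hval d hd), Finset.sum_const, nsmul_eq_mul,
      Finset.card_product, ← tau3_eq_card hd0]
    push_cast; ring
  -- disjointness
  have hdisj : Set.PairwiseDisjoint ↑(Icc 1 N) (fun d => T3 d ×ˢ T3 d) := by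
    intro u hu v hv huv
    rw [Finset.mem_coe, mem_Icc] at hu hv
    rw [Function.onFun, Finset.disjoint_left]
    intro p hpu hpv
    rw [mem_product] at hpu hpv
    exact huv ((((mem_T3 hu.1).mp hpu.1).2.2.2).symm.trans
      (((mem_T3 hv.1).mp hpv.1).2.2.2))
  set S := (Icc 1 N).biUnion (fun d => T3 d ×ˢ T3 d) with hS
  -- FF = G ∘ Phi on S, and Phi maps S into cube³, injectively
  have hmem : ∀ p ∈ S, ∃ d, d ∈ Icc 1 N ∧ 0 < d ∧ p ∈ T3 d ×ˢ T3 d := by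
    intro p hp
    rw [hS, Finset.mem_biUnion] at hp
    obtain ⟨d, hd, hpd⟩ := hp
    exact ⟨d, hd, (mem_Icc.mp hd).1, hpd⟩
  have hmaps : ∀ p ∈ S, Phi p ∈ cube N ×ˢ cube N ×ˢ cube N := by
    intro p hp
    obtain ⟨d, hdI, hd0, hpd⟩ := hmem p hp
    obtain ⟨r1, r2, r3, c1, c2, c3⟩ := Phi_spec hd0 hpd
    rw [mem_product] at hpd
    obtain ⟨ha, hb, hc, habc⟩ := (mem_T3 hd0).mp hpd.1
    obtain ⟨hx, hy, hz, hxyz⟩ := (mem_T3 hd0).mp hpd.2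
    have hdN : d ≤ N := (mem_Icc.mp hdI).2
    have hxN : p.2.1 ≤ N := le_trans (Nat.le_of_dvd hd0 ⟨p.2.2.1 * p.2.2.2, by rw [← hxyz]; ring⟩) hdN
    have hyN : p.2.2.1 ≤ N := le_trans (Nat.le_of_dvd hd0 ⟨p.2.1 * p.2.2.2, by rw [← hxyz]; ring⟩) hdN
    have hzN : p.2.2.2 ≤ N := le_trans (Nat.le_of_dvd hd0 ⟨p.2.1 * p.2.2.1, by rw [← hxyz]; ring⟩) hdN
    set M := Phi p
    obtain ⟨p11, p12, p13⟩ := mul3_pos r1 ha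
    obtain ⟨p21, p22, p23⟩ := mul3_pos r2 hb
    obtain ⟨p31, p32, p33⟩ := mul3_pos r3 hc
    -- every entry divides a column product
    have e11 : M.1.1 ≤ N := le_trans (Nat.le_of_dvd hx ⟨M.2.1.1 * M.2.2.1, by rw [← c1]; try ring⟩) hxN
    have e21 : M.2.1.1 ≤ N := le_trans (Nat.le_of_dvd hx ⟨M.1.1 * M.2.2.1, by rw [← c1]; try ring⟩) hxN
    have e31 : M.2.2.1 ≤ N := le_trans (Nat.le_of_dvd hx ⟨M.1.1 * M.2.1.1, by rw [← c1]; try ring⟩) hxN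
    have e12 : M.1.2.1 ≤ N := le_trans (Nat.le_of_dvd hy ⟨M.2.1.2.1 * M.2.2.2.1, by rw [← c2]; try ring⟩) hyN
    have e22 : M.2.1.2.1 ≤ N := le_trans (Nat.le_of_dvd hy ⟨M.1.2.1 * M.2.2.2.1, by rw [← c2]; try ring⟩) hyN
    have e32 : M.2.2.2.1 ≤ N := le_trans (Nat.le_of_dvd hy ⟨M.1.2.1 * M.2.1.2.1, by rw [← c2]; try ring⟩) hyN
    have e13 : M.1.2.2 ≤ N := le_trans (Nat.le_of_dvd hz ⟨M.2.1.2.2 * M.2.2.2.2, by rw [← c3]; try ring⟩) hzN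
    have e23 : M.2.1.2.2 ≤ N := le_trans (Nat.le_of_dvd hz ⟨M.1.2.2 * M.2.2.2.2, by rw [← c3]; try ring⟩) hzN
    have e33 : M.2.2.2.2 ≤ N := le_trans (Nat.le_of_dvd hz ⟨M.1.2.2 * M.2.1.2.2, by rw [← c3]; try ring⟩) hzN
    simp only [mem_product, cube, mem_Icc]
    exact ⟨⟨⟨p11, e11⟩, ⟨p12, e12⟩, ⟨p13, e13⟩⟩,
      ⟨⟨p21, e21⟩, ⟨p22, e22⟩, ⟨p23, e23⟩⟩,
      ⟨⟨p31, e31⟩, ⟨p32, e32⟩, ⟨p33, e33⟩⟩⟩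
  have hFG : ∀ p ∈ S, G (Phi p) = FF p := by
    intro p hp
    obtain ⟨d, hdI, hd0, hpd⟩ := hmem p hp
    obtain ⟨r1, r2, r3, _, _, _⟩ := Phi_spec hd0 hpd
    rw [mem_product] at hpd
    obtain ⟨ha, hb, hc, habc⟩ := (mem_T3 hd0).mp hpd.1
    obtain ⟨hx, hy, hz, hxyz⟩ := (mem_T3 hd0).mp hpd.2
    rw [hval d hdI p (mem_product.mpr hpd)]
    rw [G, W_eq, W_eq, W_eq]
    rw [show (Phi p).1.1 * (Phi p).1.2.1 * (Phi p).1.2.2 = p.1.1 from (mul_assoc _ _ _).trans r1,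
        show (Phi p).2.1.1 * (Phi p).2.1.2.1 * (Phi p).2.1.2.2 = p.1.2.1 from (mul_assoc _ _ _).trans r2,
        show (Phi p).2.2.1 * (Phi p).2.2.2.1 * (Phi p).2.2.2.2 = p.1.2.2 from (mul_assoc _ _ _).trans r3]
    rw [← mul_inv, ← mul_inv]
    have hc2 : (p.1.1 : ℝ) * ((p.1.2.1 : ℝ) * (p.1.2.2 : ℝ)) = (d : ℝ) := by
      have : p.1.1 * (p.1.2.1 * p.1.2.2) = d := by rw [← mul_assoc]; exact habc
      exact_mod_cast this
    rw [hc2]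
  have hinj : Set.InjOn Phi ↑S := by
    intro p hp q hq hpq
    obtain ⟨d, hdI, hd0, hpd⟩ := hmem p (Finset.mem_coe.mp hp)
    obtain ⟨e, heI, he0, hqe⟩ := hmem q (Finset.mem_coe.mp hq)
    obtain ⟨r1, r2, r3, c1, c2, c3⟩ := Phi_spec hd0 hpd
    obtain ⟨r1', r2', r3', c1', c2', c3'⟩ := Phi_spec he0 hqe
    rw [hpq] at r1 r2 r3 c1 c2 c3
    have : p.1 = q.1 := by
      apply Prod.ext (r1.symm.trans r1') (Prod.ext (r2.symm.trans r2') (r3.symm.trans r3'))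
    have h2 : p.2 = q.2 := by
      apply Prod.ext (c1.symm.trans c1') (Prod.ext (c2.symm.trans c2') (c3.symm.trans c3'))
    exact Prod.ext this h2
  calc ∑ d ∈ Icc 1 N, (tau3 d : ℝ) * (tau3 d : ℝ) * (d : ℝ)⁻¹
      = ∑ d ∈ Icc 1 N, ∑ p ∈ T3 d ×ˢ T3 d, FF p := Finset.sum_congr rfl hper
    _ = ∑ p ∈ S, FF p := (Finset.sum_biUnion hdisj).symm
    _ = ∑ p ∈ S, G (Phi p) := Finset.sum_congr rfl fun p hp => (hFG p hp).symm
    _ = ∑ T ∈ S.image Phi, G T := (Finset.sum_image fun a ha b hb =>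
          hinj (Finset.mem_coe.mpr ha) (Finset.mem_coe.mpr hb)).symm
    _ ≤ ∑ T ∈ cube N ×ˢ cube N ×ˢ cube N, G T := by
        apply Finset.sum_le_sum_of_subset_of_nonneg
        · intro T hT
          rw [Finset.mem_image] at hT
          obtain ⟨p, hp, rfl⟩ := hT
          exact hmaps p hp
        · intro T _ _
          rw [G]
          exact mul_nonneg (W_nonneg _) (mul_nonneg (W_nonneg _) (W_nonneg _))
    _ = HN N ^ 9 := sum_cube9 N
theorem stmt3 : ∃ C : ℝ, 0 < C ∧ ∀ N : ℕ, 2 ≤ N →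
    ∑ m ∈ Finset.Icc 1 N, ∑ n ∈ Finset.Icc 1 N,
      (tau3 m : ℝ) * (tau3 n : ℝ) / (Nat.lcm m n : ℝ) ≤ C * Real.log N ^ 15 := by
  have hlog2 : 0 < Real.log 2 := Real.log_pos (by norm_num)
  set c : ℝ := 1 + (Real.log 2)⁻¹ with hc
  have hcpos : 0 < c := by positivity
  refine ⟨c ^ 15, by positivity, ?_⟩
  intro N hN
  set s := Icc 1 N with hs
  set a : ℕ → ℝ := fun m => (tau3 m : ℝ) * (m : ℝ)⁻¹ with ha
  have ha_nonneg : ∀ m, 0 ≤ a m := fun m => by rw [ha]; positivity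
  set B := ∑ u ∈ s, a u with hB
  have hB_nonneg : 0 ≤ B := Finset.sum_nonneg fun u _ => ha_nonneg u
  have hH_nonneg : 0 ≤ HN N := Finset.sum_nonneg fun k _ => by positivity
  -- Step A pointwise
  have stepA : ∀ m ∈ s, ∀ n ∈ s, (tau3 m : ℝ) * (tau3 n : ℝ) / (Nat.lcm m n : ℝ)
      ≤ ∑ d ∈ s, (if d ∣ m ∧ d ∣ n then (d : ℝ) * a m * a n else 0) := by
    intro m hm n hn
    rw [hs, mem_Icc] at hm hn
    have hm0 : 0 < m := hm.1
    have hn0 : 0 < n := hn.1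
    have hg0 : 0 < Nat.gcd m n := Nat.gcd_pos_of_pos_left n hm0
    have hgmem : Nat.gcd m n ∈ s := by
      rw [hs, mem_Icc]
      exact ⟨hg0, le_trans (Nat.le_of_dvd hm0 (Nat.gcd_dvd_left m n)) hm.2⟩
    have hlcm0 : 0 < Nat.lcm m n := Nat.pos_of_ne_zero (Nat.lcm_ne_zero hm0.ne' hn0.ne')
    have key : (tau3 m : ℝ) * (tau3 n : ℝ) / (Nat.lcm m n : ℝ)
        = (Nat.gcd m n : ℝ) * a m * a n := by
      have hmuls : (Nat.gcd m n : ℝ) * (Nat.lcm m n : ℝ) = (m : ℝ) * (n : ℝ) := by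
        exact_mod_cast congrArg (Nat.cast (R := ℝ)) (Nat.gcd_mul_lcm m n)
      have h1 : (m : ℝ) ≠ 0 := Nat.cast_ne_zero.mpr hm0.ne'
      have h2 : (n : ℝ) ≠ 0 := Nat.cast_ne_zero.mpr hn0.ne'
      have h3 : (Nat.lcm m n : ℝ) ≠ 0 := Nat.cast_ne_zero.mpr hlcm0.ne'
      rw [ha, div_eq_iff h3]
      have hrearr : (Nat.gcd m n : ℝ) * ((tau3 m : ℝ) * (m : ℝ)⁻¹) * ((tau3 n : ℝ) * (n : ℝ)⁻¹) * (Nat.lcm m n : ℝ)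
          = (tau3 m : ℝ) * (tau3 n : ℝ) * ((Nat.gcd m n : ℝ) * (Nat.lcm m n : ℝ)) * ((m : ℝ)⁻¹ * (n : ℝ)⁻¹) := by
        ring
      rw [hrearr, hmuls]
      field_simp
    rw [key]
    have := Finset.single_le_sum (f := fun d => if d ∣ m ∧ d ∣ n then (d : ℝ) * a m * a n else 0)
      (fun d _ => by positivity) hgmem
    simpa [Nat.gcd_dvd_left, Nat.gcd_dvd_right] using this
  -- sum over m, n and swap
  have step1 : ∑ m ∈ s, ∑ n ∈ s, (tau3 m : ℝ) * (tau3 n : ℝ) / (Nat.lcm m n : ℝ)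
      ≤ ∑ d ∈ s, ∑ m ∈ s, ∑ n ∈ s, (if d ∣ m ∧ d ∣ n then (d : ℝ) * a m * a n else 0) := by
    have h1 : ∑ m ∈ s, ∑ n ∈ s, (tau3 m : ℝ) * (tau3 n : ℝ) / (Nat.lcm m n : ℝ)
        ≤ ∑ m ∈ s, ∑ n ∈ s, ∑ d ∈ s, (if d ∣ m ∧ d ∣ n then (d : ℝ) * a m * a n else 0) :=
      Finset.sum_le_sum fun m hm => Finset.sum_le_sum fun n hn => stepA m hm n hn
    refine h1.trans_eq ?_
    calc ∑ m ∈ s, ∑ n ∈ s, ∑ d ∈ s, (if d ∣ m ∧ d ∣ n then (d : ℝ) * a m * a n else 0)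
        = ∑ m ∈ s, ∑ d ∈ s, ∑ n ∈ s, (if d ∣ m ∧ d ∣ n then (d : ℝ) * a m * a n else 0) :=
          Finset.sum_congr rfl fun m _ => Finset.sum_comm
      _ = ∑ d ∈ s, ∑ m ∈ s, ∑ n ∈ s, (if d ∣ m ∧ d ∣ n then (d : ℝ) * a m * a n else 0) :=
          Finset.sum_comm
  -- factor the inner double sum
  have step2 : ∀ d ∈ s, ∑ m ∈ s, ∑ n ∈ s, (if d ∣ m ∧ d ∣ n then (d : ℝ) * a m * a n else 0)
      = (d : ℝ) * (∑ m ∈ s.filter (fun m => d ∣ m), a m) * (∑ n ∈ s.filter (fun n => d ∣ n), a n) := by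
    intro d _
    have hpt : ∀ m n : ℕ, (if d ∣ m ∧ d ∣ n then (d : ℝ) * a m * a n else 0)
        = (d : ℝ) * (if d ∣ m then a m else 0) * (if d ∣ n then a n else 0) := by
      intro m n
      by_cases h1 : d ∣ m <;> by_cases h2 : d ∣ n <;> simp [h1, h2]
    calc ∑ m ∈ s, ∑ n ∈ s, (if d ∣ m ∧ d ∣ n then (d : ℝ) * a m * a n else 0)
        = ∑ m ∈ s, ∑ n ∈ s, (d : ℝ) * (if d ∣ m then a m else 0) * (if d ∣ n then a n else 0) :=
          Finset.sum_congr rfl fun m _ => Finset.sum_congr rfl fun n _ => hpt m n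
      _ = ∑ m ∈ s, (d : ℝ) * (if d ∣ m then a m else 0) * (∑ n ∈ s, (if d ∣ n then a n else 0)) :=
          Finset.sum_congr rfl fun m _ => by rw [← Finset.mul_sum]
      _ = (∑ m ∈ s, (d : ℝ) * (if d ∣ m then a m else 0)) * (∑ n ∈ s, (if d ∣ n then a n else 0)) := by
          rw [Finset.sum_mul]
      _ = (d : ℝ) * (∑ m ∈ s, (if d ∣ m then a m else 0)) * (∑ n ∈ s, (if d ∣ n then a n else 0)) := by
          rw [← Finset.mul_sum]
      _ = _ := by rw [Finset.sum_filter]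
  -- bound per d
  have step3 : ∀ d ∈ s,
      (d : ℝ) * (∑ m ∈ s.filter (fun m => d ∣ m), a m) * (∑ n ∈ s.filter (fun n => d ∣ n), a n)
      ≤ B * B * ((tau3 d : ℝ) * (tau3 d : ℝ) * (d : ℝ)⁻¹) := by
    intro d hd
    rw [hs, mem_Icc] at hd
    have hd0 : 0 < d := hd.1
    have hA : ∑ m ∈ s.filter (fun m => d ∣ m), a m ≤ (tau3 d : ℝ) * (d : ℝ)⁻¹ * B := by
      rw [hB, ha, hs]
      exact Asum_le N hd0
    have hA0 : 0 ≤ ∑ m ∈ s.filter (fun m => d ∣ m), a m :=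
      Finset.sum_nonneg fun m _ => ha_nonneg m
    have hbd0 : 0 ≤ (tau3 d : ℝ) * (d : ℝ)⁻¹ * B := by positivity
    have hd0' : (0:ℝ) < d := Nat.cast_pos.mpr hd0
    calc (d : ℝ) * (∑ m ∈ s.filter (fun m => d ∣ m), a m) * (∑ n ∈ s.filter (fun n => d ∣ n), a n)
        ≤ (d : ℝ) * ((tau3 d : ℝ) * (d : ℝ)⁻¹ * B) * ((tau3 d : ℝ) * (d : ℝ)⁻¹ * B) := by
          apply mul_le_mul
          · exact mul_le_mul_of_nonneg_left hA (le_of_lt hd0')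
          · exact hA
          · exact hA0
          · positivity
      _ = B * B * ((tau3 d : ℝ) * (tau3 d : ℝ) * (d : ℝ)⁻¹) := by
          field_simp
  -- combine
  have hmain : ∑ m ∈ s, ∑ n ∈ s, (tau3 m : ℝ) * (tau3 n : ℝ) / (Nat.lcm m n : ℝ)
      ≤ HN N ^ 15 := by
    have h2 : ∑ d ∈ s, ∑ m ∈ s, ∑ n ∈ s, (if d ∣ m ∧ d ∣ n then (d : ℝ) * a m * a n else 0)
        ≤ B * B * ∑ d ∈ s, (tau3 d : ℝ) * (tau3 d : ℝ) * (d : ℝ)⁻¹ := by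
      rw [Finset.mul_sum]
      refine Finset.sum_le_sum fun d hd => ?_
      rw [step2 d hd]
      exact step3 d hd
    have h3 : B ≤ HN N ^ 3 := by rw [hB, ha, hs]; exact Bsum_le N
    have h4 : ∑ d ∈ s, (tau3 d : ℝ) * (tau3 d : ℝ) * (d : ℝ)⁻¹ ≤ HN N ^ 9 := by
      rw [hs]; exact tau3sq_le N
    have h5 : B * B * ∑ d ∈ s, (tau3 d : ℝ) * (tau3 d : ℝ) * (d : ℝ)⁻¹
        ≤ (HN N ^ 3) * (HN N ^ 3) * HN N ^ 9 := by
      apply mul_le_mul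
      · exact mul_le_mul h3 h3 hB_nonneg (by positivity)
      · exact h4
      · exact Finset.sum_nonneg fun d _ => by positivity
      · positivity
    calc ∑ m ∈ s, ∑ n ∈ s, (tau3 m : ℝ) * (tau3 n : ℝ) / (Nat.lcm m n : ℝ)
        ≤ ∑ d ∈ s, ∑ m ∈ s, ∑ n ∈ s, (if d ∣ m ∧ d ∣ n then (d : ℝ) * a m * a n else 0) := step1
      _ ≤ B * B * ∑ d ∈ s, (tau3 d : ℝ) * (tau3 d : ℝ) * (d : ℝ)⁻¹ := h2
      _ ≤ (HN N ^ 3) * (HN N ^ 3) * HN N ^ 9 := h5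
      _ = HN N ^ 15 := by ring
  -- harmonic bound
  have hlogN : Real.log 2 ≤ Real.log N := by
    apply Real.log_le_log (by norm_num)
    exact_mod_cast hN
  have hlogN0 : 0 < Real.log N := lt_of_lt_of_le hlog2 hlogN
  have hharm : HN N ≤ 1 + Real.log N := by
    have := harmonic_le_one_add_log N
    have heq : (harmonic N : ℝ) = HN N := by
      rw [harmonic_eq_sum_Icc]
      push_cast
      rfl
    linarith [heq ▸ this]
  have hHc : HN N ≤ c * Real.log N := by
    have : 1 ≤ Real.log N / Real.log 2 := (one_le_div hlog2).mpr hlogN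
    have hc2 : c * Real.log N = Real.log N + Real.log N / Real.log 2 := by
      rw [hc]; field_simp
    rw [hc2]
    linarith
  calc ∑ m ∈ s, ∑ n ∈ s, (tau3 m : ℝ) * (tau3 n : ℝ) / (Nat.lcm m n : ℝ)
      ≤ HN N ^ 15 := hmain
    _ ≤ (c * Real.log N) ^ 15 := pow_le_pow_left₀ hH_nonneg hHc 15
    _ = c ^ 15 * Real.log N ^ 15 := mul_pow _ _ _
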